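/- arXiv:2506.19294 — 6 statements merged into one kernel-verified Lean document; each statement's English description precedes it below -/
import Mathlib

section
/- For the Cressie–Read generator φ_k(t) = (t^k − k·t + k − 1)/(k(k−1)) with k > 1, defined for t ≥ 0, the convex conjugate satisfies φ_k*(y) = (1/k)·((k−1)·y + 1)_+^{k*} − 1/k where k* = k/(k−1), i.e., sup over t ≥ 0 of (t·y − φ_k(t)) equals this value for all real y. -/
/-- Convex conjugate of the Cressie–Read generator
`φ_k(t) = (t^k − k t + k − 1)/(k(k−1))` on `t ≥ 0`, for `k > 1`:
`φ_k*(y) = (1/k)·((k−1)y + 1)_+^{k*} − 1/k` with `k* = k/(k−1)`. -/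
theorem cressieRead_conjugate (k : ℝ) (hk : 1 < k) (y : ℝ) :
    IsLUB {v : ℝ | ∃ t : ℝ, 0 ≤ t ∧
        v = t * y - (t ^ k - k * t + k - 1) / (k * (k - 1))}
      ((1 / k) * (max ((k - 1) * y + 1) 0) ^ (k / (k - 1)) - 1 / k) := by
  have hk0 : (0 : ℝ) < k := by linarith
  have hk1 : (0 : ℝ) < k - 1 := by linarith
  have hkk : (0 : ℝ) < k * (k - 1) := mul_pos hk0 hk1
  have hknez : k ≠ 0 := ne_of_gt hk0
  have hk1nez : k - 1 ≠ 0 := ne_of_gt hk1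
  rcases le_or_gt ((k - 1) * y + 1) 0 with h | h
  · -- max is 0, sup is attained at t = 0
    have hmax : max ((k - 1) * y + 1) 0 = 0 := max_eq_right h
    rw [hmax, Real.zero_rpow (by positivity)]
    have hval : (1 / k) * (0 : ℝ) - 1 / k = -(1 / k) := by ring
    apply IsGreatest.isLUB
    constructor
    · exact ⟨0, le_refl 0, by
        rw [Real.zero_rpow hknez]
        field_simp
        ring⟩
    · rintro v ⟨t, ht, rfl⟩
      have htk : (0 : ℝ) ≤ t ^ k := Real.rpow_nonneg ht k
      have hy : k * t * ((k - 1) * y + 1) ≤ 0 :=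
        mul_nonpos_of_nonneg_of_nonpos (by positivity) h
      have step : t * y + 1 / k ≤ (t ^ k - k * t + k - 1) / (k * (k - 1)) := by
        rw [le_div_iff₀ hkk]
        have hinv : (1 / k) * (k * (k - 1)) = k - 1 := by field_simp
        nlinarith [hy, htk, hinv]
      linarith [step]
  · -- positive case
    set a : ℝ := (k - 1) * y + 1 with ha
    have hmax : max a 0 = a := max_eq_left h.le
    rw [hmax]
    set t₀ : ℝ := a ^ (1 / (k - 1)) with ht₀
    have ht₀pos : 0 < t₀ := Real.rpow_pos_of_pos h _
    have hP1 : t₀ ^ k = a ^ (k / (k - 1)) := by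
      rw [ht₀, ← Real.rpow_mul h.le]
      congr 1
      field_simp
    have hP2 : t₀ * a = a ^ (k / (k - 1)) := by
      have hexp : (1 : ℝ) / (k - 1) + 1 = k / (k - 1) := by field_simp; ring
      rw [ht₀, ← hexp, Real.rpow_add h, Real.rpow_one]
    set P : ℝ := a ^ (k / (k - 1)) with hPdef
    apply IsGreatest.isLUB
    constructor
    · refine ⟨t₀, ht₀pos.le, ?_⟩
      rw [hP1]
      have hP2' : t₀ * ((k - 1) * y + 1) = P := hP2
      have e : t₀ * y * (k - 1) = P - t₀ := by linear_combination hP2'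
      field_simp
      linear_combination (-k) * e
    · rintro v ⟨t, ht, rfl⟩
      have hyoung : t * a ≤ t ^ k / k + a ^ (k / (k - 1)) / (k / (k - 1)) :=
        Real.young_inequality_of_nonneg ht h.le
          (Real.HolderConjugate.conjExponent hk)
      have hyoung' : k * (t * a) ≤ t ^ k + (k - 1) * P := by
        have h1 : a ^ (k / (k - 1)) / (k / (k - 1)) = (k - 1) * P / k := by
          rw [hPdef]; field_simp
        rw [h1] at hyoung
        calc k * (t * a) ≤ k * (t ^ k / k + (k - 1) * P / k) := by
              exact mul_le_mul_of_nonneg_left hyoung hk0.le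
          _ = t ^ k + (k - 1) * P := by field_simp
      have hya : (k - 1) * y = a - 1 := by rw [ha]; ring
      have e2 : k * t * ((k - 1) * y) = k * t * a - k * t := by
        linear_combination (k * t) * hya
      have hinv1 : (1 / k) * (k * (k - 1)) = k - 1 := by field_simp
      have hinvP : (1 / k * P) * (k * (k - 1)) = (k - 1) * P := by field_simp
      rw [sub_le_iff_le_add, ← sub_le_iff_le_add', le_div_iff₀ hkk]
      nlinarith [hyoung', e2, hinv1, hinvP]
end

section
/- Let Z be a bounded real random variable under probability measure μ with essential infimum m, let δ > 0, and suppose p := μ(Z = m) < e^{−δ}. Define f(λ) = −λδ − λ·log E[exp(−Z/λ)] for λ > 0 and f(0) = m. Then the right-derivative of f at 0 equals −δ − log p > 0; in particular f(λ) > f(0) for all sufficiently small λ > 0, so λ = 0 is not a maximizer of f on [0,∞). -/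
open MeasureTheory Filter Set

/-- Strict interiority of the dual optimizer: let `Z` be bounded on a probability
space, `m = ess inf Z`, `p = μ(Z = m)`, `δ > 0`, and suppose `p < e^{−δ}`.
With `f(λ) = −λδ − λ log E[exp(−Z/λ)]` for `λ > 0` and `f(0) = m`:
the right-derivative of `f` at `0` equals `−δ − log p`, which is positive
(stated for `p > 0`; the convention `log 0 = −∞` applies when `p = 0`);
in particular `f(λ) > f(0)` for all sufficiently small `λ > 0`, so `λ = 0`
is not a maximizer of `f` on `[0,∞)`. -/
theorem zero_not_maximizer {Ω : Type*} [MeasurableSpace Ω] (μ : Measure Ω)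
    [IsProbabilityMeasure μ] (Z : Ω → ℝ) (hZmeas : Measurable Z)
    (hZbdd : ∃ Cb : ℝ, ∀ ω, |Z ω| ≤ Cb)
    (m : ℝ) (hm : m = essInf Z μ)
    (p : ℝ) (hp : p = (μ {ω | Z ω = m}).toReal)
    (δ : ℝ) (hδ : 0 < δ) (hpδ : p < Real.exp (-δ))
    (f : ℝ → ℝ) (hf0 : f 0 = m)
    (hf : ∀ lam : ℝ, 0 < lam →
      f lam = -lam * δ - lam * Real.log (∫ ω, Real.exp (-Z ω / lam) ∂μ)) :
    (0 < p →
        HasDerivWithinAt f (-δ - Real.log p) (Set.Ici (0 : ℝ)) 0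
          ∧ 0 < -δ - Real.log p)
      ∧ (∃ ε > 0, ∀ lam ∈ Set.Ioc (0 : ℝ) ε, f 0 < f lam)
      ∧ ¬ IsMaxOn f (Set.Ici (0 : ℝ)) 0 := by
  classical
  obtain ⟨Cb, hCb⟩ := hZbdd
  -- a.e., m ≤ Z
  have hbd : IsBoundedUnder (· ≥ ·) (ae μ) Z :=
    ⟨-Cb, Filter.eventually_map.2 (ae_of_all _ fun ω => (abs_le.1 (hCb ω)).1)⟩
  have hZm : ∀ᵐ ω ∂μ, m ≤ Z ω := by
    rw [hm]; exact ae_essInf_le hbd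
  set g : ℝ → ℝ := fun lam => ∫ ω, Real.exp (-(Z ω - m) / lam) ∂μ with hg
  -- integrability
  have hmeas : ∀ lam : ℝ,
      AEStronglyMeasurable (fun ω => Real.exp (-(Z ω - m) / lam)) μ := fun lam =>
    (((hZmeas.sub measurable_const).neg.div_const lam).exp).aestronglyMeasurable
  have hint : ∀ lam : ℝ, 0 < lam →
      Integrable (fun ω => Real.exp (-(Z ω - m) / lam)) μ := by
    intro lam hlam
    refine (integrable_const (1 : ℝ)).mono' (hmeas lam) ?_
    filter_upwards [hZm] with ω hω
    rw [Real.norm_eq_abs, abs_of_pos (Real.exp_pos _)]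
    exact Real.exp_le_one_iff.2 (div_nonpos_of_nonpos_of_nonneg (by linarith) hlam.le)
  -- positivity of g
  have hgpos : ∀ lam : ℝ, 0 < lam → 0 < g lam := by
    intro lam hlam
    have hlow : ∀ ω, Real.exp (-(Cb + |m|) / lam) ≤ Real.exp (-(Z ω - m) / lam) := by
      intro ω
      apply Real.exp_le_exp.2
      gcongr
      have h1 : Z ω ≤ Cb := (abs_le.1 (hCb ω)).2
      have h2 : -m ≤ |m| := neg_le_abs m
      linarith
    have := integral_mono (integrable_const _) (hint lam hlam) hlow
    simp only [integral_const, probReal_univ, smul_eq_mul, one_mul] at this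
    exact lt_of_lt_of_le (Real.exp_pos _) this
  -- limit of g as lam → 0+
  have hgm : MeasurableSet {ω | Z ω = m} := hZmeas (measurableSet_singleton m)
  have hglim : Tendsto g (nhdsWithin 0 (Set.Ioi 0)) (nhds p) := by
    have hp' : p = ∫ ω, Set.indicator {ω | Z ω = m} (fun _ => (1 : ℝ)) ω ∂μ := by
      rw [hp, integral_indicator_const _ hgm]; simp; rfl
    rw [hp']
    have : (nhdsWithin (0:ℝ) (Set.Ioi 0)).IsCountablyGenerated := by infer_instance
    refine tendsto_integral_filter_of_dominated_convergence (fun _ => (1 : ℝ))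
      (Filter.Eventually.of_forall fun lam => hmeas lam) ?_ (integrable_const 1) ?_
    · filter_upwards [self_mem_nhdsWithin] with lam (hlam : (0:ℝ) < lam)
      filter_upwards [hZm] with ω hω
      rw [Real.norm_eq_abs, abs_of_pos (Real.exp_pos _)]
      exact Real.exp_le_one_iff.2 (div_nonpos_of_nonpos_of_nonneg (by linarith) hlam.le)
    · filter_upwards [hZm] with ω hω
      by_cases hωm : Z ω = m
      · rw [Set.indicator_of_mem (show ω ∈ {ω | Z ω = m} from hωm)]
        simp only [hωm, sub_self, neg_zero, zero_div, Real.exp_zero]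
        exact tendsto_const_nhds
      · have hc : 0 < Z ω - m := sub_pos.2 (lt_of_le_of_ne hω (Ne.symm hωm))
        rw [Set.indicator_of_notMem (by exact hωm)]
        have h1 : Tendsto (fun lam : ℝ => (Z ω - m) / lam) (nhdsWithin 0 (Set.Ioi 0)) atTop := by
          simpa [div_eq_mul_inv] using tendsto_inv_nhdsGT_zero.const_mul_atTop hc
        have h2 : Tendsto (fun lam : ℝ => -(Z ω - m) / lam) (nhdsWithin 0 (Set.Ioi 0)) atBot := by
          simp only [neg_div]
          exact tendsto_neg_atTop_atBot.comp h1
        exact Real.tendsto_exp_atBot.comp h2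
  -- formula for f in terms of g
  have hfg : ∀ lam : ℝ, 0 < lam → f lam = -lam * δ + m - lam * Real.log (g lam) := by
    intro lam hlam
    have hsplit : ∀ ω, Real.exp (-Z ω / lam)
        = Real.exp (-m / lam) * Real.exp (-(Z ω - m) / lam) := by
      intro ω
      rw [← Real.exp_add]
      congr 1
      field_simp
      ring
    have hI : (∫ ω, Real.exp (-Z ω / lam) ∂μ) = Real.exp (-m / lam) * g lam := by
      simp only [hsplit]
      rw [integral_const_mul]
    rw [hf lam hlam, hI, Real.log_mul (Real.exp_ne_zero _) (ne_of_gt (hgpos lam hlam)),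
      Real.log_exp]
    field_simp
    ring
  -- slope function
  have hslope : ∀ lam ∈ Set.Ioi (0:ℝ), slope f 0 lam = -δ - Real.log (g lam) := by
    intro lam hlam
    have hlam0 : lam ≠ 0 := ne_of_gt hlam
    rw [slope_def_field, hfg lam hlam, hf0]
    field_simp
    ring
  refine ⟨?_, ?_, ?_⟩
  · intro hp0
    have hlog : Tendsto (fun lam => -δ - Real.log (g lam)) (nhdsWithin 0 (Set.Ioi 0))
        (nhds (-δ - Real.log p)) :=
      tendsto_const_nhds.sub ((Real.continuousAt_log (ne_of_gt hp0)).tendsto.comp hglim)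
    constructor
    · rw [hasDerivWithinAt_iff_tendsto_slope]
      rw [Set.Ici_sdiff_left]
      exact hlog.congr' (by filter_upwards [self_mem_nhdsWithin] with lam hlam
        using (hslope lam hlam).symm)
    · have : Real.log p < -δ := (Real.log_lt_iff_lt_exp hp0).2 hpδ
      linarith
  · have hev : ∀ᶠ lam in nhdsWithin 0 (Set.Ioi 0), g lam < Real.exp (-δ) :=
      hglim.eventually_lt_const hpδ
    have hev2 : ∀ᶠ lam in nhdsWithin (0:ℝ) (Set.Ioi 0), f 0 < f lam := by
      filter_upwards [hev, self_mem_nhdsWithin] with lam hg1 (hlam : (0:ℝ) < lam)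
      have hlog : Real.log (g lam) < -δ := (Real.log_lt_iff_lt_exp (hgpos lam hlam)).2 hg1
      rw [hf0, hfg lam hlam]
      nlinarith
    obtain ⟨u, hu, hsub⟩ := mem_nhdsGT_iff_exists_Ioc_subset.1 hev2
    exact ⟨u, hu, fun lam hlam => hsub hlam⟩
  · intro hmax
    obtain ⟨ε, hε, hεf⟩ : ∃ ε > 0, ∀ lam ∈ Set.Ioc (0 : ℝ) ε, f 0 < f lam := by
      have hev : ∀ᶠ lam in nhdsWithin 0 (Set.Ioi 0), g lam < Real.exp (-δ) :=
        hglim.eventually_lt_const hpδ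
      have hev2 : ∀ᶠ lam in nhdsWithin (0:ℝ) (Set.Ioi 0), f 0 < f lam := by
        filter_upwards [hev, self_mem_nhdsWithin] with lam hg1 (hlam : (0:ℝ) < lam)
        have hlog : Real.log (g lam) < -δ := (Real.log_lt_iff_lt_exp (hgpos lam hlam)).2 hg1
        rw [hf0, hfg lam hlam]
        nlinarith
      obtain ⟨u, hu, hsub⟩ := mem_nhdsGT_iff_exists_Ioc_subset.1 hev2
      exact ⟨u, hu, fun lam hlam => hsub hlam⟩
    have := hmax (show ε ∈ Set.Ici (0:ℝ) from le_of_lt hε)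
    exact absurd (hεf ε ⟨hε, le_refl ε⟩) (not_lt.2 this)
end

section
/- Let Z be an integrable random variable on probability space (Ω, F, μ) that is not μ-almost-surely constant, and suppose E[exp(−Z/λ)] < ∞ for all λ > 0. Then the function λ ↦ −λδ − λ·log E[exp(−Z/λ)] is strictly concave on (0, ∞) for any fixed δ ≥ 0. -/
open MeasureTheory Real

set_option linter.unusedSectionVars false
set_option linter.unusedVariables false
set_option linter.deprecated false


section aux
variable {Ω : Type*} [MeasurableSpace Ω] {μ : Measure Ω}

/-- A nonnegative a.e.-strongly-measurable function whose `p`-th power is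
integrable is in `ℒp`. -/
lemma memLp_of_integrable_rpow {f : Ω → ℝ} {p : ℝ} (hp : 1 < p)
    (hf : AEStronglyMeasurable f μ) (hnn : ∀ ω, 0 ≤ f ω)
    (hint : Integrable (fun ω => f ω ^ p) μ) :
    MemLp f (ENNReal.ofReal p) μ := by
  have hp0 : (0:ℝ) < p := lt_trans zero_lt_one hp
  have h0 : ENNReal.ofReal p ≠ 0 := by
    simp [ENNReal.ofReal_eq_zero, not_le, hp0]
  have htop : ENNReal.ofReal p ≠ ⊤ := ENNReal.ofReal_ne_top
  rw [← memLp_norm_rpow_iff (q := ENNReal.ofReal p) hf h0 htop,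
    ENNReal.div_self h0 htop, memLp_one_iff_integrable]
  refine hint.congr ?_
  filter_upwards with ω
  rw [ENNReal.toReal_ofReal hp0.le, Real.norm_eq_abs, abs_of_nonneg (hnn ω)]
end aux


section aux2
variable {Ω : Type*} [MeasurableSpace Ω] {μ : Measure Ω} [IsProbabilityMeasure μ] {Z : Ω → ℝ}


lemma convexOn_log_mgf (hZ : Integrable Z μ)
    (hexp' : ∀ t : ℝ, 0 < t → Integrable (fun ω => Real.exp (-(t * Z ω))) μ) :
    ConvexOn ℝ (Set.Ioi (0:ℝ)) (fun t => Real.log (∫ ω, Real.exp (-(t * Z ω)) ∂μ)) := by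
  have hmeas : ∀ c : ℝ, AEStronglyMeasurable (fun ω => Real.exp (-(c * Z ω))) μ := by
    intro c
    exact (Real.measurable_exp.comp_aemeasurable
      ((hZ.aemeasurable.const_mul c).neg)).aestronglyMeasurable
  have hpos : ∀ t : ℝ, 0 < t → 0 < ∫ ω, Real.exp (-(t * Z ω)) ∂μ := by
    intro t ht
    exact integral_exp_pos (hexp' t ht)
  refine ⟨convex_Ioi 0, ?_⟩
  intro s hs t ht a b ha hb hab
  rcases eq_or_lt_of_le ha with ha0 | ha
  · have hb1 : b = 1 := by linarith
    simp [← ha0, hb1]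
  rcases eq_or_lt_of_le hb with hb0 | hb
  · have ha1 : a = 1 := by linarith
    simp [← hb0, ha1]
  have hs' : (0:ℝ) < s := hs
  have ht' : (0:ℝ) < t := ht
  have ha1 : a < 1 := by linarith
  have hb1 : b < 1 := by linarith
  have hst : 0 < a * s + b * t := by positivity
  have hconj : Real.HolderConjugate (1/a) (1/b) := by
    rw [Real.holderConjugate_iff]
    constructor
    · rw [lt_div_iff₀ ha]; linarith
    · rw [one_div, inv_inv, one_div, inv_inv]; exact hab
  -- Hölder
  have hf : MemLp (fun ω => Real.exp (-(a * s * Z ω))) (ENNReal.ofReal (1/a)) μ := by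
    refine memLp_of_integrable_rpow hconj.lt (hmeas _) (fun ω => (Real.exp_pos _).le) ?_
    refine (hexp' s hs').congr ?_
    filter_upwards with ω
    simp only [← Real.exp_mul]
    congr 1
    field_simp
  have hg : MemLp (fun ω => Real.exp (-(b * t * Z ω))) (ENNReal.ofReal (1/b)) μ := by
    refine memLp_of_integrable_rpow hconj.symm.lt (hmeas _) (fun ω => (Real.exp_pos _).le) ?_
    refine (hexp' t ht').congr ?_
    filter_upwards with ω
    simp only [← Real.exp_mul]
    congr 1
    field_simp
  have hHolder := MeasureTheory.integral_mul_le_Lp_mul_Lq_of_nonneg hconj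
    (Filter.Eventually.of_forall fun ω => (Real.exp_pos _).le)
    (Filter.Eventually.of_forall fun ω => (Real.exp_pos _).le) hf hg
  -- rewrite the three integrals in hHolder
  have e1 : ∫ ω, Real.exp (-(a * s * Z ω)) * Real.exp (-(b * t * Z ω)) ∂μ
      = ∫ ω, Real.exp (-((a * s + b * t) * Z ω)) ∂μ := by
    refine integral_congr_ae (Filter.Eventually.of_forall fun ω => ?_)
    simp only [← Real.exp_add]
    ring_nf
  have e2 : ∫ ω, Real.exp (-(a * s * Z ω)) ^ (1/a) ∂μ = ∫ ω, Real.exp (-(s * Z ω)) ∂μ := by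
    refine integral_congr_ae (Filter.Eventually.of_forall fun ω => ?_)
    simp only [← Real.exp_mul]
    congr 1
    field_simp
  have e3 : ∫ ω, Real.exp (-(b * t * Z ω)) ^ (1/b) ∂μ = ∫ ω, Real.exp (-(t * Z ω)) ∂μ := by
    refine integral_congr_ae (Filter.Eventually.of_forall fun ω => ?_)
    simp only [← Real.exp_mul]
    congr 1
    field_simp
  rw [e1, e2, e3] at hHolder
  have h1a : (1:ℝ)/(1/a) = a := by field_simp
  have h1b : (1:ℝ)/(1/b) = b := by field_simp
  rw [h1a, h1b] at hHolder
  -- take logs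
  have hA := hpos s hs'
  have hB := hpos t ht'
  have hC := hpos _ hst
  calc Real.log (∫ ω, Real.exp (-((a • s + b • t) * Z ω)) ∂μ)
      ≤ Real.log ((∫ ω, Real.exp (-(s * Z ω)) ∂μ) ^ a * (∫ ω, Real.exp (-(t * Z ω)) ∂μ) ^ b) := by
        apply Real.log_le_log (by simpa [smul_eq_mul] using hC)
        simpa [smul_eq_mul] using hHolder
    _ = a • Real.log (∫ ω, Real.exp (-(s * Z ω)) ∂μ)
        + b • Real.log (∫ ω, Real.exp (-(t * Z ω)) ∂μ) := by
        rw [Real.log_mul (by positivity) (by positivity), Real.log_rpow hA, Real.log_rpow hB]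
        simp [smul_eq_mul]

end aux2


section aux3
variable {Ω : Type*} [MeasurableSpace Ω] {μ : Measure Ω} [IsProbabilityMeasure μ] {Z : Ω → ℝ}

lemma log_mgf_midpoint_strict (hZ : Integrable Z μ)
    (hnondeg : ¬ ∃ c : ℝ, Z =ᵐ[μ] fun _ => c)
    (hexp' : ∀ t : ℝ, 0 < t → Integrable (fun ω => Real.exp (-(t * Z ω))) μ)
    {s t : ℝ} (hs : 0 < s) (ht : 0 < t) (hst : s ≠ t) :
    Real.log (∫ ω, Real.exp (-(((s + t)/2) * Z ω)) ∂μ)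
      < (Real.log (∫ ω, Real.exp (-(s * Z ω)) ∂μ)
        + Real.log (∫ ω, Real.exp (-(t * Z ω)) ∂μ)) / 2 := by
  set A := ∫ ω, Real.exp (-(s * Z ω)) ∂μ with hA_def
  set B := ∫ ω, Real.exp (-(t * Z ω)) ∂μ with hB_def
  set C := ∫ ω, Real.exp (-(((s + t)/2) * Z ω)) ∂μ with hC_def
  have hmid : 0 < (s + t)/2 := by linarith
  have hAint := hexp' s hs
  have hBint := hexp' t ht
  have hCint := hexp' _ hmid
  have hA : 0 < A := integral_exp_pos hAint
  have hB : 0 < B := integral_exp_pos hBint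
  have hC : 0 < C := integral_exp_pos hCint
  -- f, h : the two half-exponentials
  set f : Ω → ℝ := fun ω => Real.exp (-(s * Z ω) / 2) with hf_def
  set h : Ω → ℝ := fun ω => Real.exp (-(t * Z ω) / 2) with hh_def
  have hf2 : ∀ ω, f ω ^ 2 = Real.exp (-(s * Z ω)) := by
    intro ω; rw [sq, ← Real.exp_add]; ring_nf
  have hh2 : ∀ ω, h ω ^ 2 = Real.exp (-(t * Z ω)) := by
    intro ω; rw [sq, ← Real.exp_add]; ring_nf
  have hfh : ∀ ω, f ω * h ω = Real.exp (-(((s + t)/2) * Z ω)) := by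
    intro ω; rw [← Real.exp_add]; ring_nf
  -- key strict Cauchy-Schwarz
  have hkey : C < Real.sqrt A * Real.sqrt B := by
    by_contra hcon
    push_neg at hcon
    set u : Ω → ℝ := fun ω => Real.sqrt B * f ω - Real.sqrt A * h ω with hu_def
    have hu2 : ∀ ω, u ω ^ 2 =
        B * Real.exp (-(s * Z ω)) + A * Real.exp (-(t * Z ω))
          - (2 * (Real.sqrt A * Real.sqrt B)) * Real.exp (-(((s + t)/2) * Z ω)) := by
      intro ω
      rw [← hf2 ω, ← hh2 ω, ← hfh ω, hu_def]
      have hsA : Real.sqrt A ^ 2 = A := Real.sq_sqrt hA.le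
      have hsB : Real.sqrt B ^ 2 = B := Real.sq_sqrt hB.le
      linear_combination (f ω ^ 2) * hsB + (h ω ^ 2) * hsA
    have hint1 : Integrable (fun ω =>
        B * Real.exp (-(s * Z ω)) + A * Real.exp (-(t * Z ω))) μ :=
      (hAint.const_mul B).add (hBint.const_mul A)
    have hint2 : Integrable (fun ω =>
        (2 * (Real.sqrt A * Real.sqrt B)) * Real.exp (-(((s + t)/2) * Z ω))) μ :=
      hCint.const_mul _
    have huint : Integrable (fun ω => u ω ^ 2) μ :=
      (hint1.sub hint2).congr (Filter.Eventually.of_forall fun ω => (hu2 ω).symm)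
    have hu_int_val : ∫ ω, u ω ^ 2 ∂μ = 2 * (A * B) - 2 * (Real.sqrt A * Real.sqrt B) * C := by
      have : ∫ ω, u ω ^ 2 ∂μ = ∫ ω,
          (B * Real.exp (-(s * Z ω)) + A * Real.exp (-(t * Z ω))
          - (2 * (Real.sqrt A * Real.sqrt B)) * Real.exp (-(((s + t)/2) * Z ω))) ∂μ :=
        integral_congr_ae (Filter.Eventually.of_forall fun ω => hu2 ω)
      rw [this, integral_sub hint1 hint2,
        integral_add (hAint.const_mul B) (hBint.const_mul A),
        integral_const_mul, integral_const_mul, integral_const_mul, ← hA_def, ← hB_def, ← hC_def]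
      have hAB : Real.sqrt A * Real.sqrt B * (Real.sqrt A * Real.sqrt B) = A * B := by
        rw [← Real.sqrt_mul hA.le, Real.mul_self_sqrt (by positivity)]
      ring
    have hsum_le : ∫ ω, u ω ^ 2 ∂μ ≤ 0 := by
      rw [hu_int_val]
      have h1 : Real.sqrt A * Real.sqrt B * (Real.sqrt A * Real.sqrt B) = A * B := by
        rw [← Real.sqrt_mul hA.le, Real.mul_self_sqrt (by positivity)]
      have h2 := mul_le_mul_of_nonneg_left hcon
        (by positivity : (0:ℝ) ≤ 2 * (Real.sqrt A * Real.sqrt B))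
      nlinarith [h1, h2]
    have hzero : ∫ ω, u ω ^ 2 ∂μ = 0 :=
      le_antisymm hsum_le (integral_nonneg fun ω => sq_nonneg _)
    have hae : (fun ω => u ω ^ 2) =ᵐ[μ] 0 :=
      (integral_eq_zero_iff_of_nonneg (fun ω => sq_nonneg _) huint).1 hzero
    -- derive that Z is a.e. constant
    apply hnondeg
    refine ⟨2 * Real.log (Real.sqrt A / Real.sqrt B) / (t - s), ?_⟩
    filter_upwards [hae] with ω hω
    have hu0 : u ω = 0 := by
      have h' : u ω ^ 2 = 0 := hω
      exact pow_eq_zero_iff (n := 2) (by norm_num) |>.1 h'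
    have hfω : Real.sqrt B * f ω = Real.sqrt A * h ω := by
      have h' : Real.sqrt B * f ω - Real.sqrt A * h ω = 0 := hu0
      linarith
    have hexp_eq : Real.exp ((t - s) / 2 * Z ω) = Real.sqrt A / Real.sqrt B := by
      have hhpos : (0:ℝ) < h ω := Real.exp_pos _
      have hBpos : (0:ℝ) < Real.sqrt B := Real.sqrt_pos.2 hB
      have : f ω / h ω = Real.sqrt A / Real.sqrt B := by
        field_simp at hfω ⊢
        linarith [hfω]
      rw [← this, hf_def, hh_def, ← Real.exp_sub]
      congr 1
      ring
    have := congrArg Real.log hexp_eq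
    rw [Real.log_exp] at this
    have hts : t - s ≠ 0 := sub_ne_zero.2 (Ne.symm hst)
    field_simp
    linarith [this]
  -- conclude via logs
  have : Real.log C < Real.log (Real.sqrt A * Real.sqrt B) := Real.log_lt_log hC hkey
  have hlog : Real.log (Real.sqrt A * Real.sqrt B) = (Real.log A + Real.log B) / 2 := by
    rw [Real.log_mul (by positivity) (by positivity), Real.log_sqrt hA.le, Real.log_sqrt hB.le]
    ring
  linarith [this, hlog ▸ this]

end aux3


lemma strictConvexOn_of_convexOn_of_midpoint {s : Set ℝ} {f : ℝ → ℝ}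
    (hc : ConvexOn ℝ s f)
    (hm : ∀ x ∈ s, ∀ y ∈ s, x ≠ y → f ((x + y)/2) < (f x + f y)/2) :
    StrictConvexOn ℝ s f := by
  refine LinearOrder.strictConvexOn_of_lt hc.1 ?_
  intro x hx y hy hxy a b ha hb hab
  simp only [smul_eq_mul]
  have hmem : (x + y)/2 ∈ s := by
    have heq : (x + y)/2 = (1/2 : ℝ)*x + (1/2 : ℝ)*y := by ring
    rw [heq]
    simpa only [smul_eq_mul] using
      hc.1 hx hy (by norm_num : (0:ℝ) ≤ 1/2) (by norm_num : (0:ℝ) ≤ 1/2) (by norm_num)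
  have hmid := hm x hx y hy hxy.ne
  rcases lt_trichotomy a (1/2) with hlt | heq | hgt
  · -- a < 1/2 : combination of midpoint and y
    have hb2 : b - a = 1 - 2*a := by linarith
    have h1 : f (a*x + b*y) ≤ (2*a) * f ((x+y)/2) + (b - a) * f y := by
      have := hc.2 hmem hy (by linarith : (0:ℝ) ≤ 2*a) (by linarith : (0:ℝ) ≤ b - a)
        (by linarith)
      simpa only [smul_eq_mul, show (2*a) * ((x+y)/2) + (b-a)*y = a*x + b*y by ring] using this
    have h2 : (2*a) * f ((x+y)/2) < (2*a) * ((f x + f y)/2) :=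
      (mul_lt_mul_iff_right₀ (by linarith)).2 hmid
    calc f (a*x + b*y) ≤ (2*a) * f ((x+y)/2) + (b - a) * f y := h1
      _ < (2*a) * ((f x + f y)/2) + (b - a) * f y := by linarith
      _ = a * f x + b * f y := by ring
  · -- a = 1/2 (A)
    have hb2 : b = 1/2 := by linarith
    have : a*x + b*y = (x+y)/2 := by rw [heq, hb2]; ring
    rw [this, heq, hb2]
    linarith [hmid]
  · -- a > 1/2 : combination of x and midpoint
    have h1 : f (a*x + b*y) ≤ (2*a - 1) * f x + (2*b) * f ((x+y)/2) := by
      have := hc.2 hx hmem (by linarith : (0:ℝ) ≤ 2*a - 1) (by linarith : (0:ℝ) ≤ 2*b)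
        (by linarith)
      have heq : (2*a-1)*x + (2*b) * ((x+y)/2) = a*x + b*y := by linear_combination x * hab
      simpa only [smul_eq_mul, heq] using this
    have h2 : (2*b) * f ((x+y)/2) < (2*b) * ((f x + f y)/2) :=
      (mul_lt_mul_iff_right₀ (by linarith)).2 hmid
    calc f (a*x + b*y) ≤ (2*a - 1) * f x + (2*b) * f ((x+y)/2) := h1
      _ < (2*a - 1) * f x + (2*b) * ((f x + f y)/2) := by linarith
      _ = a * f x + b * f y := by linear_combination (f x) * hab


/-- Strict concavity of the KL dual objective: if `Z` is integrable on a
probability space, not `μ`-a.s. constant, and `exp(−Z/λ)` is integrable for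
every `λ > 0`, then for any fixed `δ ≥ 0` the map
`λ ↦ −λδ − λ·log E[exp(−Z/λ)]` is strictly concave on `(0, ∞)`. -/
theorem kl_dual_strictConcave {Ω : Type*} [MeasurableSpace Ω] (μ : Measure Ω)
    [IsProbabilityMeasure μ] (Z : Ω → ℝ) (hZ : Integrable Z μ)
    (hnondeg : ¬ ∃ c : ℝ, Z =ᵐ[μ] fun _ => c)
    (hexp : ∀ lam : ℝ, 0 < lam → Integrable (fun ω => Real.exp (-Z ω / lam)) μ)
    (δ : ℝ) (hδ : 0 ≤ δ) :
    StrictConcaveOn ℝ (Set.Ioi (0 : ℝ))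
      (fun lam => -lam * δ - lam * Real.log (∫ ω, Real.exp (-Z ω / lam) ∂μ)) := by
  set g : ℝ → ℝ := fun t => Real.log (∫ ω, Real.exp (-(t * Z ω)) ∂μ) with hg_def
  have hexp' : ∀ t : ℝ, 0 < t → Integrable (fun ω => Real.exp (-(t * Z ω))) μ := by
    intro t ht
    refine (hexp (1/t) (by positivity)).congr ?_
    filter_upwards with ω
    congr 1
    field_simp
  have hgs : StrictConvexOn ℝ (Set.Ioi (0:ℝ)) g := by
    refine strictConvexOn_of_convexOn_of_midpoint (convexOn_log_mgf hZ hexp') ?_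
    intro x hx y hy hxy
    exact log_mgf_midpoint_strict hZ hnondeg hexp' hx hy hxy
  have hFeq : ∀ lam : ℝ, 0 < lam →
      Real.log (∫ ω, Real.exp (-Z ω / lam) ∂μ) = g (1/lam) := by
    intro lam hlam
    have harg : ∀ ω : Ω, -Z ω / lam = -(1/lam * Z ω) := by
      intro ω
      field_simp
    have hint_eq : ∫ ω, Real.exp (-Z ω / lam) ∂μ = ∫ ω, Real.exp (-(1/lam * Z ω)) ∂μ :=
      integral_congr_ae (Filter.Eventually.of_forall fun ω => congrArg Real.exp (harg ω))
    rw [hint_eq, hg_def]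
  refine LinearOrder.strictConcaveOn_of_lt (convex_Ioi 0) ?_
  intro x hx y hy hxy a b ha hb hab
  have hx' : (0:ℝ) < x := hx
  have hy' : (0:ℝ) < y := hy
  simp only [smul_eq_mul]
  have hlam : (0:ℝ) < a * x + b * y := by positivity
  have huv : 1/x ≠ 1/y := (one_div_lt_one_div_of_lt hx' hxy).ne'
  have hw : (0:ℝ) < a * x / (a * x + b * y) := by positivity
  have hw' : (0:ℝ) < b * y / (a * x + b * y) := by positivity
  have hww : a * x / (a * x + b * y) + b * y / (a * x + b * y) = 1 := by
    field_simp
  have hkey := hgs.2 (Set.mem_Ioi.2 (by positivity : (0:ℝ) < 1/x))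
    (Set.mem_Ioi.2 (by positivity : (0:ℝ) < 1/y)) huv hw hw' hww
  simp only [smul_eq_mul] at hkey
  have hcomb : a * x / (a * x + b * y) * (1/x) + b * y / (a * x + b * y) * (1/y)
      = 1/(a * x + b * y) := by
    have h1 : a * x / (a * x + b * y) * (1/x) = a / (a * x + b * y) := by
      rw [div_mul_eq_mul_div, mul_one_div, mul_div_assoc, mul_div_assoc,
        div_self hx'.ne']
      ring
    have h2 : b * y / (a * x + b * y) * (1/y) = b / (a * x + b * y) := by
      rw [div_mul_eq_mul_div, mul_one_div, mul_div_assoc, mul_div_assoc,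
        div_self hy'.ne']
      ring
    rw [h1, h2, ← add_div, hab]
  rw [hcomb] at hkey
  have hmul := mul_lt_mul_of_pos_left hkey hlam
  have hdist : (a * x + b * y) * (a * x / (a * x + b * y) * g (1/x)
      + b * y / (a * x + b * y) * g (1/y))
      = a * (x * g (1/x)) + b * (y * g (1/y)) := by
    field_simp
  rw [hdist] at hmul
  rw [hFeq x hx', hFeq y hy', hFeq _ hlam]
  calc a * (-x * δ - x * g (1/x)) + b * (-y * δ - y * g (1/y))
      = -(a * x + b * y) * δ - (a * (x * g (1/x)) + b * (y * g (1/y))) := by ring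
    _ < -(a * x + b * y) * δ - (a * x + b * y) * g (1/(a * x + b * y)) := by linarith
end

section
/- KL duality for finitely supported distributions: let μ = (p_1,…,p_d) be a probability vector with all p_i > 0, let z_1,…,z_d ∈ ℝ, and let δ > 0. Then the minimum of Σ_i q_i z_i over probability vectors q = (q_1,…,q_d) with Σ_i q_i log(q_i/p_i) ≤ δ equals sup over λ ≥ 0 of ( −λδ − λ·log Σ_i p_i exp(−z_i/λ) ), where the expression at λ = 0 is interpreted as min_i z_i restricted to indices with p_i > 0. -/
open Real Finset Filter Topology

lemma my_gibbs (d : ℕ) (a q : Fin d → ℝ) (ha : ∀ i, 0 < a i)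
    (hq : ∀ i, 0 ≤ q i) (hq1 : ∑ i, q i = 1) :
    -Real.log (∑ i, a i) ≤ ∑ i, q i * Real.log (q i / a i) := by
  have hd : 0 < d := by
    rcases Nat.eq_zero_or_pos d with h | h
    · subst h; simp at hq1
    · exact h
  have : Nonempty (Fin d) := Fin.pos_iff_nonempty.mp hd
  set S := ∑ i, a i with hS
  have hSpos : 0 < S := Finset.sum_pos (fun i _ => ha i) Finset.univ_nonempty
  have key : ∀ i, q i - a i / S ≤ q i * Real.log (q i / a i) + q i * Real.log S := by
    intro i
    rcases eq_or_lt_of_le (hq i) with h0 | hpos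
    · rw [← h0]
      simp only [zero_mul, add_zero, zero_sub, zero_mul]
      have : 0 < a i / S := div_pos (ha i) hSpos
      linarith
    · have h1 : Real.log (a i / (q i * S)) ≤ a i / (q i * S) - 1 :=
        Real.log_le_sub_one_of_pos (div_pos (ha i) (mul_pos hpos hSpos))
      have h2 : Real.log (a i / (q i * S)) =
          -(Real.log (q i / a i) + Real.log S) := by
        rw [Real.log_div (ne_of_gt (ha i)) (ne_of_gt (mul_pos hpos hSpos)),
          Real.log_mul (ne_of_gt hpos) (ne_of_gt hSpos),
          Real.log_div (ne_of_gt hpos) (ne_of_gt (ha i))]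
        ring
      have h3 : a i / (q i * S) = (a i / S) / q i := by
        field_simp
      rw [h2, h3] at h1
      have h4 : -(a i / S / q i - 1) ≤ Real.log (q i / a i) + Real.log S := by
        linarith
      have h5 : q i * -(a i / S / q i - 1) ≤
          q i * (Real.log (q i / a i) + Real.log S) :=
        mul_le_mul_of_nonneg_left h4 (le_of_lt hpos)
      have h6 : q i * -(a i / S / q i - 1) = q i - a i / S := by
        field_simp
        ring
      linarith [h5, h6.symm ▸ h5]
  have hsum := Finset.sum_le_sum (fun i (_ : i ∈ Finset.univ) => key i)
  rw [Finset.sum_sub_distrib, Finset.sum_add_distrib, hq1] at hsum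
  rw [← Finset.sum_mul, hq1, one_mul] at hsum
  rw [← Finset.sum_div, ← hS, div_self (ne_of_gt hSpos)] at hsum
  linarith

/-- KL duality for finitely supported distributions: with a probability vector
`p` (all entries positive), values `z_i`, and `δ > 0`, the minimum of `Σ q_i z_i`
over probability vectors `q` with `Σ q_i log(q_i/p_i) ≤ δ` equals the supremum
over `λ ≥ 0` of `−λδ − λ log Σ p_i exp(−z_i/λ)`, where the value at `λ = 0` is
interpreted as `min_i z_i` (all indices have `p_i > 0`).  (The convention
`0·log(0/p) = 0` holds for `Real.log` since `0 * _ = 0`.) -/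
theorem finite_kl_duality (d : ℕ) (p z : Fin d → ℝ)
    (hp : ∀ i, 0 < p i) (hp1 : ∑ i, p i = 1) (δ : ℝ) (hδ : 0 < δ) :
    sInf {v : ℝ | ∃ q : Fin d → ℝ, (∀ i, 0 ≤ q i) ∧ (∑ i, q i = 1) ∧
          (∑ i, q i * Real.log (q i / p i)) ≤ δ ∧ v = ∑ i, q i * z i}
      = sSup {w : ℝ |
          (∃ lam : ℝ, 0 < lam ∧
            w = -lam * δ - lam * Real.log (∑ i, p i * Real.exp (-z i / lam)))
          ∨ w = ⨅ i, z i} := by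
  classical
  have hd : 0 < d := by
    rcases Nat.eq_zero_or_pos d with h | h
    · exfalso; subst h; simp at hp1
    · exact h
  have hnem : Nonempty (Fin d) := Fin.pos_iff_nonempty.mp hd
  set m := ⨅ i, z i with hm
  have hbdd : BddBelow (Set.range z) := Set.Finite.bddBelow (Set.finite_range z)
  have hm_le : ∀ i, m ≤ z i := fun i => ciInf_le hbdd i
  obtain ⟨i₀, -, hi₀⟩ := Finset.exists_min_image Finset.univ z
    ⟨Classical.arbitrary (Fin d), Finset.mem_univ _⟩
  have hmi₀ : z i₀ = m :=
    le_antisymm (le_ciInf fun i => hi₀ i (Finset.mem_univ i)) (hm_le i₀)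
  set A := {v : ℝ | ∃ q : Fin d → ℝ, (∀ i, 0 ≤ q i) ∧ (∑ i, q i = 1) ∧
          (∑ i, q i * Real.log (q i / p i)) ≤ δ ∧ v = ∑ i, q i * z i} with hA
  set B := {w : ℝ |
          (∃ lam : ℝ, 0 < lam ∧
            w = -lam * δ - lam * Real.log (∑ i, p i * Real.exp (-z i / lam)))
          ∨ w = ⨅ i, z i} with hB
  -- weak duality
  have weak : ∀ w ∈ B, ∀ v ∈ A, w ≤ v := by
    rintro w hw v ⟨q, hq0, hq1, hqKL, rfl⟩
    rcases hw with ⟨lam, hlam, rfl⟩ | rfl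
    · have hgibbs := my_gibbs d (fun i => p i * Real.exp (-z i / lam)) q
        (fun i => mul_pos (hp i) (Real.exp_pos _)) hq0 hq1
      have hsplit : ∑ i, q i * Real.log (q i / (p i * Real.exp (-z i / lam)))
          = ∑ i, q i * Real.log (q i / p i) + (∑ i, q i * z i) / lam := by
        rw [Finset.sum_div, ← Finset.sum_add_distrib]
        refine Finset.sum_congr rfl fun i _ => ?_
        rcases eq_or_lt_of_le (hq0 i) with h0 | hpos
        · simp [← h0]
        · rw [Real.log_div (ne_of_gt hpos) (mul_pos (hp i) (Real.exp_pos _)).ne',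
              Real.log_mul (ne_of_gt (hp i)) (ne_of_gt (Real.exp_pos _)),
              Real.log_exp, Real.log_div (ne_of_gt hpos) (ne_of_gt (hp i))]
          ring
      rw [hsplit] at hgibbs
      have h1 : -Real.log (∑ i, p i * Real.exp (-z i / lam))
          ≤ δ + (∑ i, q i * z i) / lam := by linarith
      have h2 := mul_le_mul_of_nonneg_left h1 (le_of_lt hlam)
      have h3 : lam * (δ + (∑ i, q i * z i) / lam) = lam * δ + ∑ i, q i * z i := by
        rw [mul_add, mul_div_cancel₀ _ hlam.ne']
      rw [h3] at h2
      linarith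
    · calc m = ∑ i, q i * m := by rw [← Finset.sum_mul, hq1, one_mul]
        _ ≤ ∑ i, q i * z i :=
          Finset.sum_le_sum fun i _ => mul_le_mul_of_nonneg_left (hm_le i) (hq0 i)
  have hAne : A.Nonempty := by
    refine ⟨∑ i, p i * z i, p, fun i => (hp i).le, hp1, ?_, rfl⟩
    have : ∑ i, p i * Real.log (p i / p i) = 0 :=
      Finset.sum_eq_zero fun i _ => by
        rw [div_self (hp i).ne', Real.log_one, mul_zero]
    rw [this]; exact hδ.le
  have hBne : B.Nonempty := ⟨m, Or.inr rfl⟩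
  have hAbdd : BddBelow A := ⟨m, fun v hv => weak m (Or.inr rfl) v hv⟩
  have hBbdd : BddAbove B := by
    obtain ⟨v0, hv0⟩ := hAne
    exact ⟨v0, fun w hw => weak w hw v0 hv0⟩
  refine le_antisymm ?_ (le_csInf hAne fun v hv => csSup_le hBne fun w hw => weak w hw v hv)
  -- strong duality
  set M := Finset.univ.filter (fun i => z i = m) with hM
  set Pm := ∑ i ∈ M, p i with hPm
  have hi₀M : i₀ ∈ M := by simp [hM, hmi₀]
  have hPmpos : 0 < Pm := Finset.sum_pos (fun i _ => hp i) ⟨i₀, hi₀M⟩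
  rcases le_or_gt (-Real.log Pm) δ with hcase | hcase
  · -- the minimum is attained
    have hmA : m ∈ A := by
      refine ⟨fun i => if z i = m then p i / Pm else 0, ?_, ?_, ?_, ?_⟩
      · intro i; dsimp only; split
        · exact (div_pos (hp i) hPmpos).le
        · exact le_refl 0
      · rw [← Finset.sum_filter, ← hM, ← Finset.sum_div, ← hPm,
          div_self hPmpos.ne']
      · have : ∀ i ∈ Finset.univ,
            (if z i = m then p i / Pm else 0) *
              Real.log ((if z i = m then p i / Pm else 0) / p i)
            = (if z i = m then p i / Pm * (-Real.log Pm) else 0) := by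
          intro i _
          split
          · congr 1
            have hx : p i / Pm / p i = Pm⁻¹ := by
              field_simp
              exact div_self (hp i).ne'
            rw [hx, Real.log_inv]
          · rw [zero_mul]
        rw [Finset.sum_congr rfl this, ← Finset.sum_filter, ← hM,
          ← Finset.sum_mul, ← Finset.sum_div, ← hPm, div_self hPmpos.ne', one_mul]
        linarith
      · have : ∀ i ∈ Finset.univ,
            (if z i = m then p i / Pm else 0) * z i
            = (if z i = m then p i / Pm * m else 0) := by
          intro i _
          split
          · rename_i h; rw [h]
          · rw [zero_mul]
        rw [Finset.sum_congr rfl this, ← Finset.sum_filter, ← hM,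
          ← Finset.sum_mul, ← Finset.sum_div, ← hPm, div_self hPmpos.ne', one_mul]
    exact le_trans (csInf_le hAbdd hmA) (le_csSup hBbdd (Or.inr rfl))
  · -- constraint is active: use the Gibbs distribution at the right temperature
    set Zf : ℝ → ℝ := fun β => ∑ i, p i * Real.exp (-(β * z i)) with hZf
    have hZpos : ∀ β, 0 < Zf β := fun β =>
      Finset.sum_pos (fun i _ => mul_pos (hp i) (Real.exp_pos _)) Finset.univ_nonempty
    set qf : ℝ → Fin d → ℝ := fun β i => p i * Real.exp (-(β * z i)) / Zf β with hqf
    have hqpos : ∀ β i, 0 < qf β i := fun β i =>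
      div_pos (mul_pos (hp i) (Real.exp_pos _)) (hZpos β)
    have hqsum : ∀ β, ∑ i, qf β i = 1 := fun β => by
      rw [hqf]; dsimp only; rw [← Finset.sum_div, div_self (hZpos β).ne']
    set K : ℝ → ℝ := fun β => ∑ i, qf β i * Real.log (qf β i / p i) with hK
    have hKform : ∀ β, K β = -(β * ∑ i, qf β i * z i) - Real.log (Zf β) := by
      intro β
      have hterm : ∀ i ∈ Finset.univ, qf β i * Real.log (qf β i / p i)
          = qf β i * (-(β * z i)) - qf β i * Real.log (Zf β) := by
        intro i _
        have hx : qf β i / p i = Real.exp (-(β * z i)) / Zf β := by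
          rw [hqf]; dsimp only
          rw [div_div, mul_comm (Zf β) (p i), ← div_div,
            mul_div_cancel_left₀ _ (hp i).ne']
        rw [hx, Real.log_div (Real.exp_ne_zero _) (hZpos β).ne', Real.log_exp]
        ring
      have hstep : ∑ i, qf β i * (-(β * z i)) = -(β * ∑ i, qf β i * z i) := by
        rw [Finset.mul_sum, ← Finset.sum_neg_distrib]
        exact Finset.sum_congr rfl fun i _ => by ring
      rw [hK]; dsimp only
      rw [Finset.sum_congr rfl hterm, Finset.sum_sub_distrib, ← Finset.sum_mul,
        hqsum β, one_mul, hstep]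
    have hZ0 : Zf 0 = 1 := by
      rw [hZf]; dsimp only
      simpa using hp1
    have hK0 : K 0 = 0 := by
      rw [hK]; dsimp only
      refine Finset.sum_eq_zero fun i _ => ?_
      have hq0p : qf 0 i = p i := by
        rw [hqf]; dsimp only; rw [hZ0]; simp
      rw [hq0p, div_self (hp i).ne', Real.log_one, mul_zero]
    have hqcont : ∀ i, Continuous fun β => qf β i := by
      intro i
      apply Continuous.div
      · exact continuous_const.mul
          (Real.continuous_exp.comp (continuous_id.mul continuous_const).neg)
      · apply continuous_finset_sum
        intro j _
        exact continuous_const.mul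
          (Real.continuous_exp.comp (continuous_id.mul continuous_const).neg)
      · exact fun β => (hZpos β).ne'
    have hKcont : Continuous K := by
      apply continuous_finset_sum
      intro i _
      exact (hqcont i).mul (((hqcont i).div_const (p i)).log
        fun β => (div_pos (hqpos β i) (hp i)).ne')
    set Wf : ℝ → ℝ := fun β => ∑ i, p i * Real.exp (-(β * (z i - m))) with hWf
    have hWpos : ∀ β, 0 < Wf β := fun β =>
      Finset.sum_pos (fun i _ => mul_pos (hp i) (Real.exp_pos _)) Finset.univ_nonempty
    set Nf : ℝ → ℝ :=
      fun β => ∑ i, p i * (β * (z i - m)) * Real.exp (-(β * (z i - m))) with hNf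
    have hWlim : Tendsto Wf atTop (𝓝 Pm) := by
      have hPm' : Pm = ∑ i, (if z i = m then p i else 0) := by
        rw [hPm, hM, Finset.sum_filter]
      rw [hWf, hPm']
      apply tendsto_finset_sum
      intro i _
      by_cases hzi : z i = m
      · simp only [hzi, sub_self, mul_zero, neg_zero, Real.exp_zero, mul_one, if_pos]
        exact tendsto_const_nhds
      · rw [if_neg hzi]
        have hc : 0 < z i - m := sub_pos.mpr (lt_of_le_of_ne (hm_le i) (Ne.symm hzi))
        have h1 : Tendsto (fun β : ℝ => β * (z i - m)) atTop atTop :=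
          Tendsto.atTop_mul_const hc tendsto_id
        have h2 : Tendsto (fun β : ℝ => Real.exp (-(β * (z i - m)))) atTop (𝓝 0) :=
          Real.tendsto_exp_atBot.comp (tendsto_neg_atTop_atBot.comp h1)
        simpa using h2.const_mul (p i)
    have hNlim : Tendsto Nf atTop (𝓝 0) := by
      have h0 : (0 : ℝ) = ∑ _i : Fin d, (0 : ℝ) := by simp
      rw [hNf, h0]
      apply tendsto_finset_sum
      intro i _
      by_cases hzi : z i = m
      · simp only [hzi, sub_self, mul_zero, zero_mul, neg_zero, Real.exp_zero, mul_one]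
        exact tendsto_const_nhds
      · have hc : 0 < z i - m := sub_pos.mpr (lt_of_le_of_ne (hm_le i) (Ne.symm hzi))
        have h1 : Tendsto (fun β : ℝ => β * (z i - m)) atTop atTop :=
          Tendsto.atTop_mul_const hc tendsto_id
        have hx : Tendsto (fun x : ℝ => x * Real.exp (-x)) atTop (𝓝 0) := by
          simpa using Real.tendsto_pow_mul_exp_neg_atTop_nhds_zero 1
        have h2 := hx.comp h1
        have h3 := h2.const_mul (p i)
        simpa [Function.comp, mul_assoc] using h3
    have hKW : ∀ β, K β = -(Nf β / Wf β) - Real.log (Wf β) := by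
      intro β
      have hWZ : Wf β = Zf β * Real.exp (β * m) := by
        rw [hWf, hZf]; dsimp only
        rw [Finset.sum_mul]
        refine Finset.sum_congr rfl fun i _ => ?_
        have harg : -(β * (z i - m)) = -(β * z i) + β * m := by ring
        rw [mul_assoc, ← Real.exp_add, harg]
      have hqW : ∀ i, qf β i = p i * Real.exp (-(β * (z i - m))) / Wf β := by
        intro i
        rw [hqf]; dsimp only
        rw [hWZ]
        have he : Real.exp (-(β * (z i - m)))
            = Real.exp (-(β * z i)) * Real.exp (β * m) := by
          rw [← Real.exp_add]; congr 1; ring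
        rw [he, ← mul_assoc]
        rw [mul_div_mul_right _ _ (Real.exp_ne_zero _)]
      have h1 : ∑ i, qf β i * (β * (z i - m)) = Nf β / Wf β := by
        rw [hNf]; dsimp only
        rw [Finset.sum_div]
        exact Finset.sum_congr rfl fun i _ => by rw [hqW i]; ring
      have h2 : β * ∑ i, qf β i * z i = Nf β / Wf β + β * m := by
        rw [← h1, Finset.mul_sum]
        have h3 : ∑ i, qf β i * (β * (z i - m))
            = ∑ i, (β * (qf β i * z i) - β * m * qf β i) :=
          Finset.sum_congr rfl fun i _ => by ring
        rw [h3, Finset.sum_sub_distrib]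
        have h4' : ∑ i, β * m * qf β i = β * m := by
          rw [← Finset.mul_sum, hqsum β, mul_one]
        rw [h4']
        ring
      have h4 : Real.log (Wf β) = Real.log (Zf β) + β * m := by
        rw [hWZ, Real.log_mul (hZpos β).ne' (Real.exp_ne_zero _), Real.log_exp]
      rw [hKform β, h2]
      linarith [h4]
    have hKlim : Tendsto K atTop (𝓝 (-Real.log Pm)) := by
      have ht : Tendsto (fun β => -(Nf β / Wf β) - Real.log (Wf β)) atTop
          (𝓝 (-((0 : ℝ) / Pm) - Real.log Pm)) :=
        ((hNlim.div hWlim hPmpos.ne').neg).sub (hWlim.log hPmpos.ne')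
      have heq : K = fun β => -(Nf β / Wf β) - Real.log (Wf β) := funext hKW
      rw [heq]
      simpa using ht
    obtain ⟨B0, hB0δ, hB00⟩ :=
      ((hKlim.eventually (eventually_gt_nhds hcase)).and (eventually_ge_atTop (0 : ℝ))).exists
    have hIcc : δ ∈ Set.Icc (K 0) (K B0) := by
      rw [hK0]; exact ⟨hδ.le, hB0δ.le⟩
    obtain ⟨β, hβmem, hβK⟩ := intermediate_value_Icc hB00 hKcont.continuousOn hIcc
    have hβpos : 0 < β := by
      rcases eq_or_lt_of_le hβmem.1 with h | h
      · exfalso; rw [← h, hK0] at hβK; linarith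
      · exact h
    have hvA : (∑ i, qf β i * z i) ∈ A :=
      ⟨qf β, fun i => (hqpos β i).le, hqsum β, le_of_eq hβK, rfl⟩
    have hvB : (∑ i, qf β i * z i) ∈ B := by
      left
      refine ⟨β⁻¹, inv_pos.mpr hβpos, ?_⟩
      have hZeq : ∑ i, p i * Real.exp (-z i / β⁻¹) = Zf β := by
        rw [hZf]; dsimp only
        refine Finset.sum_congr rfl fun i _ => ?_
        congr 1
        congr 1
        rw [div_inv_eq_mul]
        ring
      rw [hZeq]
      have h5 : -(β * ∑ i, qf β i * z i) - Real.log (Zf β) = δ := by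
        rw [← hKform β]; exact hβK
      have h6 : β * (∑ i, qf β i * z i)
          = β * (-β⁻¹ * δ - β⁻¹ * Real.log (Zf β)) := by
        have hb : β * β⁻¹ = 1 := mul_inv_cancel₀ hβpos.ne'
        have hrhs : β * (-β⁻¹ * δ - β⁻¹ * Real.log (Zf β))
            = -δ - Real.log (Zf β) := by
          linear_combination (-δ - Real.log (Zf β)) * hb
        rw [hrhs]
        linarith
      exact mul_left_cancel₀ hβpos.ne' h6
    exact le_trans (csInf_le hAbdd hvA) (le_csSup hBbdd hvB)
end

section
/- Lagrangian inner minimization for Cressie–Read: fix k > 1, k* = k/(k−1), λ > 0, β, z ∈ ℝ. Then inf over x ≥ 0 of ( z·x + λ·(x^k − k·x + k − 1)/(k(k−1)) − β·x ) equals −λ·( (1/k)·((k−1)(β−z)/λ + 1)_+^{k*} − 1/k ). -/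
/-- Lagrangian inner minimization for Cressie–Read: for `k > 1`, `k* = k/(k−1)`,
`λ > 0`, `β, z ∈ ℝ`,
`inf_{x ≥ 0} ( z·x + λ·(x^k − kx + k−1)/(k(k−1)) − β·x )
  = −λ·((1/k)·((k−1)(β−z)/λ + 1)_+^{k*} − 1/k)`. -/
theorem cressieRead_lagrangian_inner (k lam β z : ℝ) (hk : 1 < k) (hlam : 0 < lam) :
    IsGLB {v : ℝ | ∃ x : ℝ, 0 ≤ x ∧
        v = z * x + lam * ((x ^ k - k * x + k - 1) / (k * (k - 1))) - β * x}
      (-(lam * ((1 / k) * (max ((k - 1) * (β - z) / lam + 1) 0) ^ (k / (k - 1))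
          - 1 / k))) := by
  have hk0 : (0:ℝ) < k := by linarith
  have hk1 : (0:ℝ) < k - 1 := by linarith
  set t : ℝ := (k - 1) * (β - z) / lam + 1 with ht
  set s : ℝ := max t 0 with hs
  have hs0 : 0 ≤ s := le_max_right _ _
  have hconj : k.HolderConjugate (k / (k - 1)) := Real.HolderConjugate.conjExponent hk
  have hβ : β = z + lam * (t - 1) / (k - 1) := by
    field_simp [ht]
    rw [ht]
    field_simp
    ring
  apply IsLeast.isGLB
  constructor
  · -- membership: the minimum is attained
    rcases le_or_gt t 0 with htle | htpos
    · refine ⟨0, le_refl 0, ?_⟩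
      have hsz : s = 0 := max_eq_right htle
      rw [hsz, Real.zero_rpow (by positivity : k / (k-1) ≠ 0),
        Real.zero_rpow (ne_of_gt hk0)]
      field_simp
      ring
    · have hsz : s = t := max_eq_left htpos.le
      set x : ℝ := t ^ (1 / (k - 1)) with hx
      have hx0 : 0 ≤ x := Real.rpow_nonneg htpos.le _
      refine ⟨x, hx0, ?_⟩
      have hxk : x ^ k = t ^ (k / (k - 1)) := by
        rw [hx, ← Real.rpow_mul htpos.le]
        ring_nf
      have htx : t * x = t ^ (k / (k - 1)) := by
        nth_rewrite 1 [hx, ← Real.rpow_one t]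
        rw [← Real.rpow_add htpos]
        congr 1
        field_simp
        ring
      rw [hsz, hxk, hβ]
      clear_value x s t
      field_simp
      linear_combination (lam * k) * htx
  · -- lower bound
    rintro v ⟨x, hx0, rfl⟩
    have hyoung2 : x * s ≤ x ^ k / k + s ^ (k / (k - 1)) / (k / (k - 1)) :=
      Real.young_inequality_of_nonneg hx0 hs0 hconj
    have hts : t ≤ s := le_max_left _ _
    have hY : k * (x * s) ≤ x ^ k + (k - 1) * s ^ (k / (k - 1)) := by
      have h := mul_le_mul_of_nonneg_left hyoung2 hk0.le
      have heq : k * (x ^ k / k + s ^ (k / (k - 1)) / (k / (k - 1)))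
          = x ^ k + (k - 1) * s ^ (k / (k - 1)) := by
        field_simp
      linarith [heq.le, heq.ge]
    have key : k * t * x ≤ x ^ k + (k - 1) * s ^ (k / (k - 1)) := by
      calc k * t * x = k * (x * t) := by ring
        _ ≤ k * (x * s) :=
          mul_le_mul_of_nonneg_left (mul_le_mul_of_nonneg_left hts hx0) hk0.le
        _ ≤ _ := hY
    have h4 : 0 ≤ lam / (k * (k - 1)) * (x ^ k + (k - 1) * s ^ (k / (k - 1)) - k * t * x) :=
      mul_nonneg (by positivity) (by linarith)
    have h3 : z * x + lam * ((x ^ k - k * x + k - 1) / (k * (k - 1)))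
          - (z + lam * (t - 1) / (k - 1)) * x
        = lam / (k * (k - 1)) * (x ^ k + (k - 1) * s ^ (k / (k - 1)) - k * t * x)
          + (-(lam * (1 / k * s ^ (k / (k - 1)) - 1 / k))) := by
      field_simp
      ring
    rw [hβ, h3]
    linarith
end

section
/- rMLMC telescoping unbiasedness: let (Δ_n)_{n ≥ n_0} be real random variables with Σ_{n ≥ n_0} E|Δ_n| < ∞, let N be an independent integer random variable supported on {n_0, n_0+1, …} with pmf p(n) > 0 for all n ≥ n_0, and let Y_0 be integrable. Then the estimator E := Y_0 + Δ_N / p(N) satisfies E[E] = E[Y_0] + Σ_{n ≥ n_0} E[Δ_n]. -/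
open MeasureTheory ProbabilityTheory

/-- rMLMC telescoping unbiasedness: let `(Δ_n)_{n ≥ n₀}` (indexed here by
`Δ (n₀ + n)`) be real random variables with `Σ_{n ≥ n₀} E|Δ_n| < ∞`, let `N` be
an independent integer random variable supported on `{n₀, n₀+1, …}` with pmf
`p(n) > 0` for all `n ≥ n₀`, and let `Y₀` be integrable.  Then the estimator
`E := Y₀ + Δ_N / p(N)` is integrable and
`E[E] = E[Y₀] + Σ_{n ≥ n₀} E[Δ_n]`. -/
theorem rmlmc_unbiased {Ω : Type*} [MeasurableSpace Ω]
    (P : Measure Ω) [IsProbabilityMeasure P]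
    (n₀ : ℕ) (Δ : ℕ → Ω → ℝ) (hΔmeas : ∀ n, Measurable (Δ n))
    (hΔint : ∀ n, Integrable (Δ n) P)
    (hΔsum : Summable (fun n : ℕ => ∫ ω, |Δ (n₀ + n) ω| ∂P))
    (Y₀ : Ω → ℝ) (hY₀ : Integrable Y₀ P)
    (N : Ω → ℕ) (hN : Measurable N)
    (hindep : IndepFun N (fun ω => (Y₀ ω, fun n => Δ n ω)) P)
    (p : ℕ → ℝ) (hp : ∀ n, p n = (P {ω | N ω = n}).toReal)
    (hppos : ∀ n, n₀ ≤ n → 0 < p n)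
    (hsupp : ∀ᵐ ω ∂P, n₀ ≤ N ω) :
    Integrable (fun ω => Y₀ ω + Δ (N ω) ω / p (N ω)) P
      ∧ ∫ ω, (Y₀ ω + Δ (N ω) ω / p (N ω)) ∂P
        = (∫ ω, Y₀ ω ∂P) + ∑' n : ℕ, ∫ ω, Δ (n₀ + n) ω ∂P := by
  classical
  set g : Ω → ℝ := fun ω => Δ (N ω) ω / p (N ω) with hg
  set χ : ℕ → Ω → ℝ := fun m ω => if N ω = m then 1 else 0 with hχ
  set F : ℕ → Ω → ℝ := fun n ω => χ (n₀ + n) ω * (Δ (n₀ + n) ω / p (n₀ + n)) with hF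
  -- χ as an indicator
  have hχind : ∀ m, χ m = Set.indicator (N ⁻¹' {m}) (fun _ => (1 : ℝ)) := by
    intro m
    funext ω
    simp [hχ, Set.indicator_apply]
  have hχmeas : ∀ m, Measurable (χ m) := by
    intro m
    rw [hχind]
    exact measurable_const.indicator (hN (measurableSet_singleton m))
  have hχint : ∀ m, Integrable (χ m) P := by
    intro m
    rw [hχind]
    exact (integrable_const (1 : ℝ)).indicator (hN (measurableSet_singleton m))
  have hχval : ∀ m, ∫ ω, χ m ω ∂P = p m := by
    intro m
    rw [hp]
    have : {ω | N ω = m} = N ⁻¹' {m} := rfl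
    rw [this, hχind]
    rw [integral_indicator_const (1 : ℝ) (hN (measurableSet_singleton m))]
    simp [Measure.real]
  -- independence facts
  have hφmeas : ∀ m, Measurable (fun k : ℕ => if k = m then (1 : ℝ) else 0) :=
    fun m => measurable_from_top
  have hind : ∀ m, IndepFun (χ m) (Δ m) P := by
    intro m
    exact hindep.comp (hφmeas m) ((measurable_pi_apply m).comp measurable_snd)
  have hinda : ∀ m, IndepFun (χ m) (fun ω => |Δ m ω|) P := by
    intro m
    exact hindep.comp (hφmeas m)
      (measurable_abs.comp ((measurable_pi_apply m).comp measurable_snd))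
  -- product integral identities
  have hmul : ∀ m, ∫ ω, χ m ω * Δ m ω ∂P = p m * ∫ ω, Δ m ω ∂P := by
    intro m
    simpa [hχval m] using (hind m).integral_mul_eq_mul_integral (hχint m).aestronglyMeasurable (hΔint m).aestronglyMeasurable
  have hmula : ∀ m, ∫ ω, χ m ω * |Δ m ω| ∂P = p m * ∫ ω, |Δ m ω| ∂P := by
    intro m
    simpa [hχval m] using (hinda m).integral_mul_eq_mul_integral (hχint m).aestronglyMeasurable (hΔint m).abs.aestronglyMeasurable
  -- integrability of F n
  have hFint : ∀ n, Integrable (F n) P := by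
    intro n
    exact ((hΔint (n₀ + n)).div_const _).bdd_mul (c := 1)
      (hχmeas (n₀ + n)).aestronglyMeasurable
      (Filter.Eventually.of_forall fun ω => by by_cases h : N ω = n₀ + n <;> simp [hχ, h])
  -- integral of F n
  have hFval : ∀ n, ∫ ω, F n ω ∂P = ∫ ω, Δ (n₀ + n) ω ∂P := by
    intro n
    have hpn := hppos (n₀ + n) (Nat.le_add_right _ _)
    have : ∀ ω, F n ω = (χ (n₀ + n) ω * Δ (n₀ + n) ω) / p (n₀ + n) := by
      intro ω; simp [hF, mul_div_assoc]
    simp_rw [this]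
    rw [integral_div, hmul]
    field_simp
  -- integral of ‖F n‖
  have hFnorm : ∀ n, ∫ ω, ‖F n ω‖ ∂P = ∫ ω, |Δ (n₀ + n) ω| ∂P := by
    intro n
    have hpn := hppos (n₀ + n) (Nat.le_add_right _ _)
    have : ∀ ω, ‖F n ω‖ = (χ (n₀ + n) ω * |Δ (n₀ + n) ω|) / p (n₀ + n) := by
      intro ω
      by_cases h : N ω = n₀ + n <;>
        simp [hF, hχ, h, abs_div, abs_of_pos hpn, mul_div_assoc]
    simp_rw [this]
    rw [integral_div, hmula]
    field_simp
  have hFsum : Summable (fun n => ∫ ω, ‖F n ω‖ ∂P) := by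
    simpa only [hFnorm] using hΔsum
  -- a.e. pointwise identity
  have hae : ∀ᵐ ω ∂P, (∑' n, F n ω) = g ω := by
    filter_upwards [hsupp] with ω hω
    have hb : n₀ + (N ω - n₀) = N ω := Nat.add_sub_cancel' hω
    have h1 : F (N ω - n₀) ω = g ω := by
      simp [hF, hχ, hb, hg]
    rw [tsum_eq_single (N ω - n₀) ?_, h1]
    intro n hn
    have : N ω ≠ n₀ + n := by omega
    simp [hF, hχ, this]
  -- measurability of g
  have hgmeas : Measurable g := by
    have hu : Measurable (fun q : Ω × ℕ => Δ q.2 q.1) :=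
      measurable_from_prod_countable_left (fun n => hΔmeas n)
    have h1 : Measurable (fun ω => Δ (N ω) ω) :=
      hu.comp (measurable_id.prodMk hN)
    exact h1.div (measurable_from_top.comp hN)
  -- integrability of g
  have hgint : Integrable g P := by
    refine ⟨hgmeas.aestronglyMeasurable, ?_⟩
    have haemeas : ∀ n, AEMeasurable (fun ω => (‖F n ω‖₊ : ENNReal)) P :=
      fun n => (hFint n).aestronglyMeasurable.enorm
    have hbound : ∀ᵐ ω ∂P, (‖g ω‖₊ : ENNReal) ≤ ∑' n, (‖F n ω‖₊ : ENNReal) := by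
      filter_upwards [hsupp] with ω hω
      have hb : n₀ + (N ω - n₀) = N ω := Nat.add_sub_cancel' hω
      have h1 : F (N ω - n₀) ω = g ω := by simp [hF, hχ, hb, hg]
      calc (‖g ω‖₊ : ENNReal) = ‖F (N ω - n₀) ω‖₊ := by rw [h1]
        _ ≤ ∑' n, (‖F n ω‖₊ : ENNReal) := ENNReal.le_tsum _
    calc ∫⁻ ω, ‖g ω‖₊ ∂P ≤ ∫⁻ ω, ∑' n, (‖F n ω‖₊ : ENNReal) ∂P :=
          lintegral_mono_ae hbound
      _ = ∑' n, ∫⁻ ω, ‖F n ω‖₊ ∂P := lintegral_tsum haemeas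
      _ = ∑' n, ENNReal.ofReal (∫ ω, ‖F n ω‖ ∂P) := by
          congr 1; funext n
          rw [ofReal_integral_norm_eq_lintegral_enorm (hFint n)]; rfl
      _ = ENNReal.ofReal (∑' n, ∫ ω, ‖F n ω‖ ∂P) := by
          rw [ENNReal.ofReal_tsum_of_nonneg
            (fun n => integral_nonneg (fun ω => norm_nonneg _)) hFsum]
      _ < ⊤ := ENNReal.ofReal_lt_top
  -- the value of ∫ g
  have hgval : ∫ ω, g ω ∂P = ∑' n : ℕ, ∫ ω, Δ (n₀ + n) ω ∂P := by
    have := integral_tsum_of_summable_integral_norm hFint hFsum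
    rw [← integral_congr_ae hae, ← this]
    congr 1; funext n; exact hFval n
  refine ⟨hY₀.add hgint, ?_⟩
  rw [integral_add hY₀ hgint, hgval]
end
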